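/- In a tracial noncommutative probability space (𝒜, φ), if X is an element with 𝐗 its Hermitization as above, then (tr₂ ⊗ φ)(e^{iu𝐗}) = φ(cos(u|X|)) for all real u. -/

import Mathlib

open scoped ComplexOrder

noncomputable section

variable {A : Type*} [CStarAlgebra A]

/-- `cosOfSqrt u a` is `cos(u √a)`, given by the power series
`Σ_ℓ (−1)^ℓ u^{2ℓ} a^ℓ / (2ℓ)!`; for `a = X X*` this is `cos(u|X|)` with
`|X| = (XX*)^{1/2}`. -/
def cosOfSqrt (u : ℝ) (a : A) : A :=
  ∑' ℓ : ℕ, ((((-1 : ℝ) ^ ℓ * u ^ (2 * ℓ) / (2 * ℓ).factorial : ℝ) : ℂ)) • a ^ ℓ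

/-- The exponential of a `2 × 2` matrix over `A`, as the sum of the exponential power
series. -/
def matrixExp (M : Matrix (Fin 2) (Fin 2) A) : Matrix (Fin 2) (Fin 2) A :=
  ∑' n : ℕ, ((n.factorial : ℂ)⁻¹) • M ^ n

private lemma herm_sq (X : A) :
    !![(0 : A), X; star X, 0] * !![(0 : A), X; star X, 0] =
      !![X * star X, 0; 0, star X * X] := by
  rw [Matrix.mul_fin_two]; simp

private lemma herm_pow_even (X : A) (ℓ : ℕ) :
    !![(0 : A), X; star X, 0] ^ (2 * ℓ) =
      !![(X * star X) ^ ℓ, 0; 0, (star X * X) ^ ℓ] := by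
  induction ℓ with
  | zero => simp [Matrix.one_fin_two]
  | succ n ih =>
    have h2 : 2 * (n + 1) = 2 * n + 2 := by ring
    rw [h2, pow_add, ih, pow_two, herm_sq, Matrix.mul_fin_two]
    simp [pow_succ]

private lemma herm_pow_odd (X : A) (ℓ : ℕ) :
    !![(0 : A), X; star X, 0] ^ (2 * ℓ + 1) =
      !![0, (X * star X) ^ ℓ * X; (star X * X) ^ ℓ * star X, 0] := by
  rw [pow_succ, herm_pow_even, Matrix.mul_fin_two]
  simp

set_option maxHeartbeats 1000000 in
private lemma summable_cos_series [Nontrivial A] (u : ℝ) (a : A) :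
    Summable (fun ℓ : ℕ =>
      ((((-1 : ℝ) ^ ℓ * u ^ (2 * ℓ) / (2 * ℓ).factorial : ℝ) : ℂ)) • a ^ ℓ) := by
  apply Summable.of_norm_bounded (g := fun ℓ => (u ^ 2 * ‖a‖) ^ ℓ / ℓ.factorial)
    (Real.summable_pow_div_factorial _)
  intro ℓ
  rw [norm_smul, Complex.norm_real, Real.norm_eq_abs, abs_div, abs_mul, abs_pow, abs_pow,
    abs_neg, abs_one, one_pow, one_mul, Nat.abs_cast]
  calc |u| ^ (2 * ℓ) / ((2 * ℓ).factorial : ℝ) * ‖a ^ ℓ‖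
      ≤ |u| ^ (2 * ℓ) / (ℓ.factorial : ℝ) * ‖a‖ ^ ℓ := by
        gcongr
        · omega
        · exact norm_pow_le a ℓ
    _ = (u ^ 2 * ‖a‖) ^ ℓ / ℓ.factorial := by
        rw [pow_mul, sq_abs, mul_pow]; ring

set_option maxHeartbeats 1000000 in
private lemma summable_odd_series [Nontrivial A] (u : ℝ) (a v : A) :
    Summable (fun ℓ : ℕ =>
      ((((2 * ℓ + 1).factorial : ℂ))⁻¹ * ((u : ℂ) * Complex.I) ^ (2 * ℓ + 1)) •
        (a ^ ℓ * v)) := by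
  have hg : Summable (fun ℓ : ℕ => (|u| * ‖v‖) * ((u ^ 2 * ‖a‖) ^ ℓ / ℓ.factorial)) :=
    (Real.summable_pow_div_factorial (u ^ 2 * ‖a‖)).mul_left _
  apply Summable.of_norm_bounded hg
  intro ℓ
  have hnc : ‖(u : ℂ) * Complex.I‖ = |u| := by
    simp [Complex.norm_real]
  rw [norm_smul, norm_mul, norm_inv, norm_pow, hnc]
  have hfac : ‖((2 * ℓ + 1).factorial : ℂ)‖ = ((2 * ℓ + 1).factorial : ℝ) := by
    simp
  rw [hfac]
  calc ((2 * ℓ + 1).factorial : ℝ)⁻¹ * |u| ^ (2 * ℓ + 1) * ‖a ^ ℓ * v‖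
      ≤ ((ℓ.factorial : ℝ))⁻¹ * |u| ^ (2 * ℓ + 1) * (‖a‖ ^ ℓ * ‖v‖) := by
        gcongr
        · omega
        · exact (norm_mul_le _ _).trans (by gcongr; exact norm_pow_le a ℓ)
    _ = (|u| * ‖v‖) * ((u ^ 2 * ‖a‖) ^ ℓ / ℓ.factorial) := by
        rw [pow_succ, pow_mul, sq_abs, mul_pow]; ring

private lemma pow_star_mul (X : A) (k : ℕ) :
    (star X * X) ^ (k + 1) = star X * ((X * star X) ^ k * X) := by
  induction k with
  | zero => simp
  | succ n ih =>
    rw [pow_succ, ih, pow_succ]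
    simp only [mul_assoc]

set_option maxHeartbeats 1000000 in
/-- In a tracial C*-probability space `(𝒜, φ)`, for `X ∈ 𝒜` with Hermitization
`𝐗 = [[0, X], [X*, 0]]`, one has `(tr₂ ⊗ φ)(e^{iu𝐗}) = φ(cos(u|X|))` for all real `u`,
where `tr₂` is the normalized trace on `2 × 2` matrices and `|X| = (XX*)^{1/2}`. -/
theorem tr2_phi_matrixExp_hermitization
    (φ : A →ₗ[ℂ] ℂ) (hφ_cont : Continuous φ)
    (hφ_one : φ 1 = 1)
    (hφ_pos : ∀ a : A, 0 ≤ φ (star a * a))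
    (hφ_trace : ∀ a b : A, φ (a * b) = φ (b * a))
    (X : A) (u : ℝ) :
    (1 / 2 : ℂ) *
        (φ ((matrixExp (((u : ℂ) * Complex.I) • !![0, X; star X, 0])) 0 0) +
         φ ((matrixExp (((u : ℂ) * Complex.I) • !![0, X; star X, 0])) 1 1)) =
      φ (cosOfSqrt u (X * star X)) := by
  rcases subsingleton_or_nontrivial A with h | h
  · have h1 : (1 : A) = 0 := Subsingleton.elim _ _
    rw [h1, map_zero] at hφ_one
    exact absurd hφ_one.symm one_ne_zero
  set a : A := X * star X with ha
  set b : A := star X * X with hb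
  set c : ℂ := (u : ℂ) * Complex.I with hc
  have hcoef_even : ∀ ℓ : ℕ, (((2 * ℓ).factorial : ℂ))⁻¹ * c ^ (2 * ℓ) =
      ((((-1 : ℝ) ^ ℓ * u ^ (2 * ℓ) / (2 * ℓ).factorial : ℝ) : ℂ)) := by
    intro ℓ
    rw [hc, mul_pow, pow_mul Complex.I, Complex.I_sq]
    push_cast
    ring
  set F : ℕ → Matrix (Fin 2) (Fin 2) A :=
    fun n => ((n.factorial : ℂ)⁻¹) • (c • !![(0 : A), X; star X, 0]) ^ n with hF
  have hFentry : ∀ n (i j : Fin 2),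
      F n i j = (((n.factorial : ℂ))⁻¹ * c ^ n) • ((!![(0 : A), X; star X, 0] ^ n) i j) := by
    intro n i j
    simp only [hF, smul_pow, Matrix.smul_apply, smul_smul]
  have hcos_a := summable_cos_series u a
  have hcos_b := summable_cos_series u b
  have hodd_a := summable_odd_series u a X
  have hodd_b := summable_odd_series u b (star X)
  have hinj2 : Function.Injective (fun ℓ : ℕ => 2 * ℓ) := fun x y hxy => by
    dsimp only at hxy; omega
  have hinj2' : Function.Injective (fun ℓ : ℕ => 2 * ℓ + 1) := fun x y hxy => by
    dsimp only at hxy; omega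
  -- diagonal entries
  have h00 : HasSum (fun n => F n 0 0) (cosOfSqrt u a) := by
    rw [← Function.Injective.hasSum_iff hinj2 ?_]
    · have he : ((fun n => F n 0 0) ∘ fun ℓ => 2 * ℓ) =
          fun ℓ => ((((-1 : ℝ) ^ ℓ * u ^ (2 * ℓ) / (2 * ℓ).factorial : ℝ) : ℂ)) • a ^ ℓ := by
        funext ℓ
        simp only [Function.comp_apply]
        rw [hFentry, herm_pow_even, hcoef_even]
        simp
        rfl
      rw [he]
      exact hcos_a.hasSum
    · intro n hn
      have hodd : Odd n := by
        rcases Nat.even_or_odd n with ⟨k, hk⟩ | ho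
        · exact absurd ⟨k, by dsimp only; omega⟩ hn
        · exact ho
      obtain ⟨ℓ, rfl⟩ := hodd
      rw [hFentry, herm_pow_odd]
      simp
  have h11 : HasSum (fun n => F n 1 1) (cosOfSqrt u b) := by
    rw [← Function.Injective.hasSum_iff hinj2 ?_]
    · have he : ((fun n => F n 1 1) ∘ fun ℓ => 2 * ℓ) =
          fun ℓ => ((((-1 : ℝ) ^ ℓ * u ^ (2 * ℓ) / (2 * ℓ).factorial : ℝ) : ℂ)) • b ^ ℓ := by
        funext ℓ
        simp only [Function.comp_apply]
        rw [hFentry, herm_pow_even, hcoef_even]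
        simp
        rfl
      rw [he]
      exact hcos_b.hasSum
    · intro n hn
      have hodd : Odd n := by
        rcases Nat.even_or_odd n with ⟨k, hk⟩ | ho
        · exact absurd ⟨k, by dsimp only; omega⟩ hn
        · exact ho
      obtain ⟨ℓ, rfl⟩ := hodd
      rw [hFentry, herm_pow_odd]
      simp
  -- off-diagonal entries
  have h01 : HasSum (fun n => F n 0 1)
      (∑' ℓ : ℕ, ((((2 * ℓ + 1).factorial : ℂ))⁻¹ * c ^ (2 * ℓ + 1)) • (a ^ ℓ * X)) := by
    rw [← Function.Injective.hasSum_iff hinj2' ?_]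
    · have he : ((fun n => F n 0 1) ∘ fun ℓ => 2 * ℓ + 1) =
          fun ℓ => ((((2 * ℓ + 1).factorial : ℂ))⁻¹ * c ^ (2 * ℓ + 1)) • (a ^ ℓ * X) := by
        funext ℓ
        simp only [Function.comp_apply]
        rw [hFentry, herm_pow_odd]
        simp
        rfl
      rw [he]
      exact hodd_a.hasSum
    · intro n hn
      have heven : Even n := by
        rcases Nat.even_or_odd n with he | ⟨k, hk⟩
        · exact he
        · exact absurd ⟨k, by dsimp only; omega⟩ hn
      obtain ⟨k, hk⟩ := heven
      have hn2 : n = 2 * k := by omega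
      subst hn2
      rw [hFentry, herm_pow_even]
      simp
  have h10 : HasSum (fun n => F n 1 0)
      (∑' ℓ : ℕ, ((((2 * ℓ + 1).factorial : ℂ))⁻¹ * c ^ (2 * ℓ + 1)) • (b ^ ℓ * star X)) := by
    rw [← Function.Injective.hasSum_iff hinj2' ?_]
    · have he : ((fun n => F n 1 0) ∘ fun ℓ => 2 * ℓ + 1) =
          fun ℓ => ((((2 * ℓ + 1).factorial : ℂ))⁻¹ * c ^ (2 * ℓ + 1)) • (b ^ ℓ * star X) := by
        funext ℓ
        simp only [Function.comp_apply]
        rw [hFentry, herm_pow_odd]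
        simp
        rfl
      rw [he]
      exact hodd_b.hasSum
    · intro n hn
      have heven : Even n := by
        rcases Nat.even_or_odd n with he | ⟨k, hk⟩
        · exact he
        · exact absurd ⟨k, by dsimp only; omega⟩ hn
      obtain ⟨k, hk⟩ := heven
      have hn2 : n = 2 * k := by omega
      subst hn2
      rw [hFentry, herm_pow_even]
      simp
  -- the matrix sum
  set T : Matrix (Fin 2) (Fin 2) A :=
    !![cosOfSqrt u a, ∑' ℓ : ℕ, ((((2 * ℓ + 1).factorial : ℂ))⁻¹ * c ^ (2 * ℓ + 1)) • (a ^ ℓ * X);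
       ∑' ℓ : ℕ, ((((2 * ℓ + 1).factorial : ℂ))⁻¹ * c ^ (2 * ℓ + 1)) • (b ^ ℓ * star X),
       cosOfSqrt u b] with hT
  have hTsum : HasSum F T := by
    refine Pi.hasSum.mpr ?_
    intro i
    rw [Pi.hasSum]
    intro j
    fin_cases i <;> fin_cases j
    · simpa [hT] using h00
    · simpa [hT] using h01
    · simpa [hT] using h10
    · simpa [hT] using h11
  have hexp : matrixExp (c • !![(0 : A), X; star X, 0]) = T := hTsum.tsum_eq
  -- φ of the cosine series; trace property
  set Φ : A →L[ℂ] ℂ := ⟨φ, hφ_cont⟩ with hΦ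
  have hφpow : ∀ ℓ : ℕ, φ (b ^ ℓ) = φ (a ^ ℓ) := by
    intro ℓ
    cases ℓ with
    | zero => rw [pow_zero, pow_zero]
    | succ k =>
      rw [hb, pow_star_mul, hφ_trace, ha, pow_succ]
      congr 1
      rw [mul_assoc]
  have h1 : φ (cosOfSqrt u b) =
      ∑' ℓ : ℕ, ((((-1 : ℝ) ^ ℓ * u ^ (2 * ℓ) / (2 * ℓ).factorial : ℝ) : ℂ)) * φ (b ^ ℓ) :=
    (Φ.map_tsum hcos_b).trans (tsum_congr fun ℓ => by rw [map_smul, smul_eq_mul]; rfl)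
  have h2 : φ (cosOfSqrt u a) =
      ∑' ℓ : ℕ, ((((-1 : ℝ) ^ ℓ * u ^ (2 * ℓ) / (2 * ℓ).factorial : ℝ) : ℂ)) * φ (a ^ ℓ) :=
    (Φ.map_tsum hcos_a).trans (tsum_congr fun ℓ => by rw [map_smul, smul_eq_mul]; rfl)
  have hφcos : φ (cosOfSqrt u b) = φ (cosOfSqrt u a) := by
    rw [h1, h2]
    exact tsum_congr fun ℓ => by rw [hφpow]
  rw [hexp]
  have hT00 : T 0 0 = cosOfSqrt u a := by simp [hT]
  have hT11 : T 1 1 = cosOfSqrt u b := by simp [hT]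
  rw [hT00, hT11, hφcos]
  ring

end
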